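/- Suppose v* ∈ ℝⁿ with ‖v*‖₂ = 1, J(v*) − σI is invertible, and φ(v*) = ε v* for some sign ε ∈ {+1, −1}. Then (λ*, v*) is an eigenpair, i.e. A(v*)v* = λ* v*, where λ* := σ + ε/‖(J(v*) − σI)⁻¹v*‖₂; moreover λ* = v*ᵀA(v*)v*. -/

import Mathlib

open Matrix Asymptotics Topology
open scoped RealInnerProductSpace

noncomputable def mvCLM {ι : Type*} [Fintype ι] [DecidableEq ι] (M : Matrix ι ι ℝ) :
    EuclideanSpace ℝ ι →L[ℝ] EuclideanSpace ℝ ι :=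
  LinearMap.toContinuousLinearMap (Matrix.toEuclideanLin M)

noncomputable def invitPsi {n : ℕ} (J : EuclideanSpace ℝ (Fin n) → Matrix (Fin n) (Fin n) ℝ)
    (σ : ℝ) (v : EuclideanSpace ℝ (Fin n)) : EuclideanSpace ℝ (Fin n) :=
  mvCLM ((J v - σ • 1)⁻¹) v

noncomputable def invitPhi {n : ℕ} (J : EuclideanSpace ℝ (Fin n) → Matrix (Fin n) (Fin n) ℝ)
    (σ : ℝ) (v : EuclideanSpace ℝ (Fin n)) : EuclideanSpace ℝ (Fin n) :=
  ‖invitPsi J σ v‖⁻¹ • invitPsi J σ v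

noncomputable def rayQuot {n : ℕ} (A : EuclideanSpace ℝ (Fin n) → Matrix (Fin n) (Fin n) ℝ)
    (v : EuclideanSpace ℝ (Fin n)) : ℝ :=
  ⟪v, mvCLM (A v) v⟫ / ⟪v, v⟫

lemma mvCLM_mul {ι : Type*} [Fintype ι] [DecidableEq ι] (M N : Matrix ι ι ℝ)
    (x : EuclideanSpace ℝ ι) : mvCLM (M * N) x = mvCLM M (mvCLM N x) := by
  simp [mvCLM, Matrix.toEuclideanLin_apply, Matrix.mulVec_mulVec]

lemma mvCLM_one {ι : Type*} [Fintype ι] [DecidableEq ι] (x : EuclideanSpace ℝ ι) :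
    mvCLM (1 : Matrix ι ι ℝ) x = x := by
  simp [mvCLM, Matrix.toEuclideanLin_apply]

lemma mvCLM_sub {ι : Type*} [Fintype ι] [DecidableEq ι] (M N : Matrix ι ι ℝ)
    (x : EuclideanSpace ℝ ι) : mvCLM (M - N) x = mvCLM M x - mvCLM N x := by
  simp [mvCLM, map_sub]

lemma mvCLM_smul {ι : Type*} [Fintype ι] [DecidableEq ι] (c : ℝ) (M : Matrix ι ι ℝ)
    (x : EuclideanSpace ℝ ι) : mvCLM (c • M) x = c • mvCLM M x := by
  simp [mvCLM, _root_.map_smul]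

/-- If `‖v*‖ = 1`, `J(v*) − σI` is invertible and `φ(v*) = ε v*`
with `ε ∈ {+1, −1}`, then `(λ*, v*)` is an eigenpair of `A`, where
`λ* = σ + ε/‖(J(v*) − σI)⁻¹v*‖`; moreover `λ* = v*ᵀ A(v*) v*`. -/
theorem stmt5 {n : ℕ} (hn : 1 ≤ n)
    (A J : EuclideanSpace ℝ (Fin n) → Matrix (Fin n) (Fin n) ℝ)
    (hsymm : ∀ v : EuclideanSpace ℝ (Fin n), v ≠ 0 → (A v).IsSymm)
    (hsmooth : ContDiffOn ℝ 1 (fun w i j => A w i j) {(0 : EuclideanSpace ℝ (Fin n))}ᶜ)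
    (hscale : ∀ α : ℝ, α ≠ 0 → ∀ v : EuclideanSpace ℝ (Fin n), v ≠ 0 → A (α • v) = A v)
    (hJ : ∀ v : EuclideanSpace ℝ (Fin n), v ≠ 0 →
      HasFDerivAt (fun w => mvCLM (A w) w) (mvCLM (J v)) v)
    (σ : ℝ) (vstar : EuclideanSpace ℝ (Fin n)) (hnorm : ‖vstar‖ = 1)
    (hinv : IsUnit (J vstar - σ • (1 : Matrix (Fin n) (Fin n) ℝ)))
    (ε : ℝ) (hε : ε = 1 ∨ ε = -1)
    (hfix : invitPhi J σ vstar = ε • vstar)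
    (lam : ℝ)
    (hlam : lam = σ + ε / ‖mvCLM ((J vstar - σ • 1)⁻¹) vstar‖) :
    mvCLM (A vstar) vstar = lam • vstar ∧ lam = ⟪vstar, mvCLM (A vstar) vstar⟫ := by
  have hv0 : vstar ≠ 0 := by
    intro h; rw [h, norm_zero] at hnorm; norm_num at hnorm
  set B : Matrix (Fin n) (Fin n) ℝ := J vstar - σ • 1 with hB
  have hBinv : B * B⁻¹ = 1 :=
    Matrix.mul_nonsing_inv B ((Matrix.isUnit_iff_isUnit_det B).mp hinv)
  set ψ : EuclideanSpace ℝ (Fin n) := mvCLM B⁻¹ vstar with hψ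
  have hBψ : mvCLM B ψ = vstar := by
    rw [hψ, ← mvCLM_mul, hBinv, mvCLM_one]
  have hψ0 : ψ ≠ 0 := by
    intro h
    apply hv0
    rw [← hBψ, h, map_zero]
  have hn0 : ‖ψ‖ ≠ 0 := norm_ne_zero_iff.mpr hψ0
  have hε0 : ε ≠ 0 := by rcases hε with h | h <;> simp [h]
  have hε2 : ε * ε = 1 := by rcases hε with h | h <;> simp [h]
  have hεinv : ε⁻¹ = ε := by rcases hε with h | h <;> norm_num [h]
  have hne : ‖ψ‖ * ε ≠ 0 := mul_ne_zero hn0 hε0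
  -- fixed point equation
  have hfix' : ‖ψ‖⁻¹ • ψ = ε • vstar := hfix
  have hψnorm : ψ = (‖ψ‖ * ε) • vstar := by
    calc ψ = ‖ψ‖ • (‖ψ‖⁻¹ • ψ) := by rw [smul_smul, mul_inv_cancel₀ hn0, one_smul]
    _ = ‖ψ‖ • (ε • vstar) := by rw [hfix']
    _ = (‖ψ‖ * ε) • vstar := by rw [smul_smul]
  -- Euler identity: J(v*) v* = A(v*) v*
  have hEuler : mvCLM (J vstar) vstar = mvCLM (A vstar) vstar := by
    have hD := hJ vstar hv0
    have hD1 : HasFDerivAt (fun w => mvCLM (A w) w) (mvCLM (J vstar)) ((1 : ℝ) • vstar) := by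
      rwa [one_smul]
    have hc : HasDerivAt (fun t : ℝ => t • vstar) vstar 1 := by
      simpa using (hasDerivAt_id (1 : ℝ)).smul_const vstar
    have hcomp : HasDerivAt (fun t : ℝ => mvCLM (A (t • vstar)) (t • vstar))
        (mvCLM (J vstar) vstar) 1 :=
      by have := hD1.comp_hasDerivAt (1 : ℝ) hc; exact this
    have heq : (fun t : ℝ => mvCLM (A (t • vstar)) (t • vstar)) =ᶠ[𝓝 (1 : ℝ)]
        fun t : ℝ => t • mvCLM (A vstar) vstar := by
      filter_upwards [eventually_ne_nhds (one_ne_zero (α := ℝ))] with t ht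
      rw [hscale t ht vstar hv0]
      exact (mvCLM (A vstar)).map_smul t vstar
    have hcomp' : HasDerivAt (fun t : ℝ => t • mvCLM (A vstar) vstar)
        (mvCLM (J vstar) vstar) 1 := hcomp.congr_of_eventuallyEq heq.symm
    have hlin : HasDerivAt (fun t : ℝ => t • mvCLM (A vstar) vstar)
        (mvCLM (A vstar) vstar) 1 := by
      simpa using (hasDerivAt_id (1 : ℝ)).smul_const (mvCLM (A vstar) vstar)
    exact hcomp'.unique hlin
  -- main computation
  have key : vstar = (‖ψ‖ * ε) • (mvCLM (A vstar) vstar - σ • vstar) := by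
    calc vstar = mvCLM B ψ := hBψ.symm
    _ = mvCLM B ((‖ψ‖ * ε) • vstar) := by rw [← hψnorm]
    _ = (‖ψ‖ * ε) • mvCLM B vstar := (mvCLM B).map_smul _ _
    _ = (‖ψ‖ * ε) • (mvCLM (A vstar) vstar - σ • vstar) := by
        rw [hB, mvCLM_sub, mvCLM_smul, mvCLM_one, hEuler]
  have h1 : (‖ψ‖ * ε)⁻¹ • vstar = mvCLM (A vstar) vstar - σ • vstar := by
    conv_lhs => rw [key, smul_smul, inv_mul_cancel₀ hne, one_smul]
  have h2 : (‖ψ‖ * ε)⁻¹ = ε / ‖ψ‖ := by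
    rw [mul_inv, hεinv, div_eq_mul_inv, mul_comm]
  have hmain : mvCLM (A vstar) vstar = lam • vstar := by
    have h3 : mvCLM (A vstar) vstar = (ε / ‖ψ‖) • vstar + σ • vstar := by
      rw [← h2]
      exact sub_eq_iff_eq_add.mp h1.symm
    rw [h3, hlam, add_smul]
    abel
  refine ⟨hmain, ?_⟩
  rw [hmain, real_inner_smul_right, real_inner_self_eq_norm_sq, hnorm]
  ring
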